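/- Let d ≥ 1, let B ⊆ ℝ^d be measurable, let I ⊆ ℝ be an open interval, and let ζ : ℝ^d × ℝ → ℝ^d be such that for each t ∈ I the map ζ(·,t) is injective on B and differentiable at every s ∈ B with Jacobian F(s,t) satisfying det F(s,t) > 0. Let ρ₀ : ℝ^d → ℝ, and let ρ : ℝ^d × ℝ → ℝ satisfy the Lagrangian mass balance ρ(ζ(s,t),t) · det F(s,t) = ρ₀(s) for all s ∈ B and t ∈ I. Let ψ, ψ̇ : ℝ^d × ℝ → ℝ be such that for every s ∈ B and t ∈ I the map τ ↦ ψ(ζ(s,τ),τ) is differentiable at t with derivative ψ̇(ζ(s,t),t). Assume further that: for each t ∈ I the map s ↦ ρ₀(s)·ψ(ζ(s,t),t) is integrable on B and s ↦ ρ₀(s)·ψ̇(ζ(s,t),t) is almost-everywhere strongly measurable on B; and there is an integrable g : B → ℝ such that |ρ₀(s)·ψ̇(ζ(s,τ),τ)| ≤ g(s) for almost every s ∈ B and every τ ∈ I. Then for every t₀ ∈ I the function t ↦ ∫_{ζ(·,t)(B)} ρ(x,t)·ψ(x,t) dx has derivative at t₀ equal to ∫_{ζ(·,t₀)(B)} ρ(x,t₀)·ψ̇(x,t₀)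 dx. -/

import Mathlib

open Matrix MeasureTheory Filter Set Topology

/-- A countable "dense enough" sequence in `Ioo a b`. -/
lemma stmt5_dense (a b : ℝ) (hab : a < b) :
    ∃ q : ℕ → ℝ, (∀ k, q k ∈ Set.Ioo a b) ∧
      ∀ τ ∈ Set.Ioo a b, ∀ n : ℕ, ∃ k, |q k - τ| < 1 / (n + 1) := by
  classical
  set D : Set ℝ := Set.Ioo a b ∩ Set.range ((↑) : ℚ → ℝ) with hD
  have hDc : D.Countable :=
    Set.Countable.mono Set.inter_subset_right (Set.countable_range _)
  obtain ⟨r, har, hrb⟩ := exists_rat_btwn hab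
  have hDne : D.Nonempty := ⟨(r : ℝ), ⟨har, hrb⟩, ⟨r, rfl⟩⟩
  obtain ⟨q, hq⟩ := hDc.exists_eq_range hDne
  refine ⟨q, fun k => ?_, ?_⟩
  · have : q k ∈ D := hq ▸ Set.mem_range_self k
    exact this.1
  · intro τ hτ n
    have hε : (0 : ℝ) < 1 / (n + 1) := by positivity
    have hlt : max a (τ - 1 / (n + 1)) < τ :=
      max_lt hτ.1 (by linarith)
    obtain ⟨r', hr1, hr2⟩ := exists_rat_btwn hlt
    have hr'D : (r' : ℝ) ∈ D := by
      refine ⟨⟨lt_of_le_of_lt (le_max_left _ _) hr1, hr2.trans hτ.2⟩, ⟨r', rfl⟩⟩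
    rw [hq] at hr'D
    obtain ⟨k, hk⟩ := hr'D
    refine ⟨k, ?_⟩
    have h1 : τ - 1 / (n + 1) ≤ max a (τ - 1 / (n + 1)) := le_max_right _ _
    rw [hk, abs_lt]
    constructor <;> linarith

/-- Key measure-theoretic step: from a family of a.e. (in `s`) bounds indexed by `τ`,
produce for a.e. `s` a measurable version of the `τ`-derivative together with an
a.e. (in `τ`) bound.  This uses a jointly measurable modification and Fubini. -/
lemma stmt5_swap {d : ℕ} {B : Set (Fin d → ℝ)} (hB : MeasurableSet B) {a b : ℝ}
    {H Hd : (Fin d → ℝ) → ℝ → ℝ} {g : (Fin d → ℝ) → ℝ} (hg : IntegrableOn g B)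
    (hder : ∀ s ∈ B, ∀ t ∈ Set.Ioo a b, HasDerivAt (H s) (Hd s t) t)
    (hmeas : ∀ t ∈ Set.Ioo a b, AEStronglyMeasurable (fun s => H s t) (volume.restrict B))
    (hbound : ∀ τ ∈ Set.Ioo a b, ∀ᵐ s ∂(volume.restrict B), |Hd s τ| ≤ g s) :
    ∀ᵐ s ∂(volume.restrict B), s ∈ B ∧
      (∃ G : ℝ → ℝ, Measurable G ∧ ∀ τ ∈ Set.Ioo a b, G τ = Hd s τ) ∧
      ∀ᵐ τ ∂(volume.restrict (Set.Ioo a b)), |Hd s τ| ≤ g s := by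
  classical
  by_cases hab : a < b
  swap
  · have hempty : Set.Ioo a b = ∅ := Set.Ioo_eq_empty hab
    filter_upwards [ae_restrict_mem hB] with s hs
    refine ⟨hs, ⟨fun _ => 0, measurable_const, fun τ hτ => by simp [hempty] at hτ⟩, ?_⟩
    simp [hempty]
  obtain ⟨q, hqmem, hqdense⟩ := stmt5_dense a b hab
  set μB := volume.restrict B with hμB
  set ν := volume.restrict (Set.Ioo a b) with hν
  -- measurable versions of `H · (q k)` and of `g`
  obtain ⟨M, hMmeas, hMae⟩ : ∃ M : ℕ → (Fin d → ℝ) → ℝ, (∀ k, StronglyMeasurable (M k)) ∧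
      ∀ᵐ s ∂μB, ∀ k, H s (q k) = M k s :=
    ⟨fun k => (hmeas (q k) (hqmem k)).mk _,
      fun k => (hmeas (q k) (hqmem k)).stronglyMeasurable_mk,
      ae_all_iff.2 fun k => (hmeas (q k) (hqmem k)).ae_eq_mk⟩
  obtain ⟨g', hg'meas, hg'ae⟩ : ∃ g' : (Fin d → ℝ) → ℝ, StronglyMeasurable g' ∧
      ∀ᵐ s ∂μB, g s = g' s :=
    ⟨hg.1.mk _, hg.1.stronglyMeasurable_mk, hg.1.ae_eq_mk⟩
  have hae : ∀ᵐ s ∂μB, (∀ k, H s (q k) = M k s) ∧ g s = g' s := hMae.and hg'ae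
  -- a good measurable subset of `B`
  set Nset : Set (Fin d → ℝ) := {s | ¬ ((∀ k, H s (q k) = M k s) ∧ g s = g' s)} with hNset
  have hNnull : μB Nset = 0 := by
    rw [ae_iff] at hae
    exact hae
  set B' : Set (Fin d → ℝ) := B \ toMeasurable μB Nset with hB'def
  have hB' : MeasurableSet B' := hB.diff (measurableSet_toMeasurable _ _)
  have hB'B : B' ⊆ B := Set.diff_subset
  have hrew : ∀ (f : (Fin d → ℝ) × ℝ → ℝ),
      (fun p : (Fin d → ℝ) × ℝ => if p.1 ∈ B' ∧ p.2 ∈ Set.Ioo a b then f p else 0) =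
        (B' ×ˢ Set.Ioo a b).piecewise f (fun _ => 0) := by
    intro f
    ext p
    by_cases hp : p.1 ∈ B' ∧ p.2 ∈ Set.Ioo a b
    · rw [if_pos hp, Set.piecewise_eq_of_mem _ _ _ (Set.mem_prod.2 hp)]
    · rw [if_neg hp, Set.piecewise_eq_of_notMem _ _ _ (fun h => hp (Set.mem_prod.1 h))]
  have hgood : ∀ s ∈ B', (∀ k, H s (q k) = M k s) ∧ g s = g' s := by
    intro s hs
    by_contra h
    exact hs.2 (subset_toMeasurable _ _ h)
  have haeB' : ∀ᵐ s ∂μB, s ∈ B' := by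
    have h2 : ∀ᵐ s ∂μB, s ∉ toMeasurable μB Nset := by
      rw [← MeasureTheory.measure_eq_zero_iff_ae_notMem, measure_toMeasurable]
      exact hNnull
    filter_upwards [ae_restrict_mem hB, h2] with s h1 h2
    exact ⟨h1, h2⟩
  -- measurable selection of approximating rationals
  have hsel : ∀ (n : ℕ) (τ : ℝ), ∃ k, τ ∈ Set.Ioo a b → |q k - τ| < 1 / (n + 1) := by
    intro n τ
    by_cases h : τ ∈ Set.Ioo a b
    · obtain ⟨k, hk⟩ := hqdense τ h n
      exact ⟨k, fun _ => hk⟩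
    · exact ⟨0, fun h' => absurd h' h⟩
  set sel : ℕ → ℝ → ℕ := fun n τ => Nat.find (hsel n τ) with hseldef
  have hselm : ∀ n, Measurable (sel n) := by
    intro n
    refine measurable_find _ fun k => ?_
    have : {τ : ℝ | τ ∈ Set.Ioo a b → |q k - τ| < 1 / (n + 1)} =
        (Set.Ioo a b)ᶜ ∪ Set.Ioo (q k - 1 / (n + 1)) (q k + 1 / (n + 1)) := by
      ext τ
      simp only [Set.mem_setOf_eq, Set.mem_union, Set.mem_compl_iff, Set.mem_Ioo,
        imp_iff_not_or, abs_lt]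
      constructor
      · rintro (h | ⟨h1, h2⟩)
        · exact Or.inl h
        · exact Or.inr ⟨by linarith, by linarith⟩
      · rintro (h | ⟨h1, h2⟩)
        · exact Or.inl h
        · exact Or.inr ⟨by linarith, by linarith⟩
    rw [this]
    exact (measurableSet_Ioo.compl.union measurableSet_Ioo)
  have hspec : ∀ (n : ℕ) (τ : ℝ), τ ∈ Set.Ioo a b → |q (sel n τ) - τ| < 1 / (n + 1) :=
    fun n τ => Nat.find_spec (hsel n τ)
  -- jointly measurable version of `H`
  set Htil : (Fin d → ℝ) × ℝ → ℝ := fun p =>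
    if p.1 ∈ B' ∧ p.2 ∈ Set.Ioo a b then H p.1 p.2 else 0 with hHtildef
  have hHtil : Measurable Htil := by
    have hcond : MeasurableSet (B' ×ˢ Set.Ioo a b) := hB'.prod measurableSet_Ioo
    refine measurable_of_tendsto_metrizable
      (f := fun n p => if p.1 ∈ B' ∧ p.2 ∈ Set.Ioo a b then M (sel n p.2) p.1 else 0)
      (fun n => ?_) ?_
    · show Measurable fun p : (Fin d → ℝ) × ℝ =>
        if p.1 ∈ B' ∧ p.2 ∈ Set.Ioo a b then M (sel n p.2) p.1 else 0
      rw [hrew]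
      refine Measurable.piecewise hcond ?_ measurable_const
      have h1 : Measurable (fun c : (Fin d → ℝ) × ℕ => M c.2 c.1) :=
        measurable_from_prod_countable_left fun k => (hMmeas k).measurable
      exact h1.comp (measurable_fst.prodMk ((hselm n).comp measurable_snd))
    · rw [hHtildef, tendsto_pi_nhds]
      intro p
      by_cases hp : p.1 ∈ B' ∧ p.2 ∈ Set.Ioo a b
      · simp only [if_pos hp]
        have hq_tend : Tendsto (fun n => q (sel n p.2)) atTop (𝓝 p.2) := by
          rw [tendsto_iff_dist_tendsto_zero]
          refine squeeze_zero (fun n => dist_nonneg) (fun n => ?_)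
            tendsto_one_div_add_atTop_nhds_zero_nat
          rw [Real.dist_eq]
          exact (hspec n p.2 hp.2).le
        have hcont : ContinuousAt (H p.1) p.2 :=
          (hder p.1 (hB'B hp.1) p.2 hp.2).continuousAt
        refine (hcont.tendsto.comp hq_tend).congr fun n => ?_
        exact (hgood p.1 hp.1).1 (sel n p.2)
      · simp only [if_neg hp]
        exact tendsto_const_nhds
  have hHtil_eq : ∀ s ∈ B', ∀ τ ∈ Set.Ioo a b, Htil (s, τ) = H s τ := by
    intro s hs τ hτ
    simp only [Htil, if_pos (⟨hs, hτ⟩ : s ∈ B' ∧ τ ∈ Set.Ioo a b)]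
  -- jointly measurable version of `Hd`
  set φ : ℕ → ℝ → ℝ := fun n τ => τ + (b - τ) / (n + 2) with hφdef
  have hφmem : ∀ n, ∀ τ ∈ Set.Ioo a b, φ n τ ∈ Set.Ioo a b ∧ φ n τ ≠ τ := by
    intro n τ hτ
    have hbτ : 0 < b - τ := by linarith [hτ.2]
    have hn2 : (0 : ℝ) < (n : ℝ) + 2 := by positivity
    have hpos : 0 < (b - τ) / ((n : ℝ) + 2) := div_pos hbτ hn2
    have hlt : (b - τ) / ((n : ℝ) + 2) < b - τ := by
      rw [div_lt_iff₀ hn2]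
      nlinarith
    simp only [hφdef, Set.mem_Ioo]
    refine ⟨⟨?_, ?_⟩, ?_⟩
    · linarith [hτ.1]
    · linarith
    · exact ne_of_gt (by linarith)
  set Gtil : (Fin d → ℝ) × ℝ → ℝ := fun p =>
    if p.1 ∈ B' ∧ p.2 ∈ Set.Ioo a b then Hd p.1 p.2 else 0 with hGtildef
  have hGtil : Measurable Gtil := by
    have hcond : MeasurableSet (B' ×ˢ Set.Ioo a b) := hB'.prod measurableSet_Ioo
    refine measurable_of_tendsto_metrizable
      (f := fun n p => if p.1 ∈ B' ∧ p.2 ∈ Set.Ioo a b then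
        (Htil (p.1, φ n p.2) - Htil p) / (φ n p.2 - p.2) else 0)
      (fun n => ?_) ?_
    · show Measurable fun p : (Fin d → ℝ) × ℝ =>
        if p.1 ∈ B' ∧ p.2 ∈ Set.Ioo a b then
          (Htil (p.1, φ n p.2) - Htil p) / (φ n p.2 - p.2) else 0
      rw [hrew]
      refine Measurable.piecewise hcond ?_ measurable_const
      have hφm : Measurable (φ n) := by
        rw [hφdef]
        fun_prop
      exact ((hHtil.comp (measurable_fst.prodMk (hφm.comp measurable_snd))).sub hHtil).div
        ((hφm.comp measurable_snd).sub measurable_snd)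
    · rw [hGtildef, tendsto_pi_nhds]
      intro p
      by_cases hp : p.1 ∈ B' ∧ p.2 ∈ Set.Ioo a b
      · simp only [if_pos hp]
        have hφt : Tendsto (fun n => φ n p.2) atTop (𝓝[≠] p.2) := by
          rw [tendsto_nhdsWithin_iff]
          constructor
          · have h0 : Tendsto (fun n : ℕ => (b - p.2) / ((n : ℝ) + 2)) atTop (𝓝 0) := by
              apply Tendsto.div_atTop tendsto_const_nhds
              exact tendsto_atTop_add_const_right atTop 2 tendsto_natCast_atTop_atTop
            have := h0.const_add p.2
            simpa [hφdef] using this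
          · exact Eventually.of_forall fun n => (hφmem n p.2 hp.2).2
        have hslope := hasDerivAt_iff_tendsto_slope.1 (hder p.1 (hB'B hp.1) p.2 hp.2)
        refine (hslope.comp hφt).congr fun n => ?_
        have h1 := hHtil_eq p.1 hp.1 (φ n p.2) (hφmem n p.2 hp.2).1
        have h2 := hHtil_eq p.1 hp.1 p.2 hp.2
        simp only [Function.comp_apply, slope_def_field]
        rw [h1, show Htil p = Htil (p.1, p.2) from rfl, h2]
      · simp only [if_neg hp]
        exact tendsto_const_nhds
  have hGtil_eq : ∀ s ∈ B', ∀ τ ∈ Set.Ioo a b, Gtil (s, τ) = Hd s τ := by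
    intro s hs τ hτ
    simp only [Gtil, if_pos (⟨hs, hτ⟩ : s ∈ B' ∧ τ ∈ Set.Ioo a b)]
  -- Fubini step
  set E : Set ((Fin d → ℝ) × ℝ) := {p | g' p.1 < |Gtil p|} with hEdef
  have hE : MeasurableSet E :=
    measurableSet_lt (hg'meas.measurable.comp measurable_fst) hGtil.abs
  set E' : Set (ℝ × (Fin d → ℝ)) := Prod.swap ⁻¹' E with hE'def
  have hE' : MeasurableSet E' := measurable_swap hE
  have hnull : (ν.prod μB) E' = 0 := by
    rw [Measure.measure_prod_null hE']
    have : ∀ᵐ τ ∂ν, μB (Prod.mk τ ⁻¹' E') = 0 := by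
      filter_upwards [ae_restrict_mem measurableSet_Ioo] with τ hτ
      have h1 : ∀ᵐ s ∂μB, ¬ (g' s < |Gtil (s, τ)|) := by
        filter_upwards [hbound τ hτ, haeB'] with s hb hs
        rw [hGtil_eq s hs τ hτ, ← (hgood s hs).2]
        exact not_lt.2 hb
      have h1' : μB {s | g' s < |Gtil (s, τ)|} = 0 := by
        rw [ae_iff] at h1
        simpa using h1
      exact h1'
    exact this
  have hprodnull : (μB.prod ν) E = 0 := by
    have hmap : Measure.map Prod.swap (ν.prod μB) = μB.prod ν := Measure.prod_swap
    rw [← hmap, Measure.map_apply measurable_swap hE]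
    exact hnull
  have haeprod : ∀ᵐ p ∂(μB.prod ν), ¬ (g' p.1 < |Gtil p|) :=
    MeasureTheory.measure_eq_zero_iff_ae_notMem.1 hprodnull
  have hfin := Measure.ae_ae_of_ae_prod haeprod
  -- conclusion
  filter_upwards [hfin, haeB', ae_restrict_mem hB] with s h1 h2 h3
  refine ⟨h3, ⟨fun τ => Gtil (s, τ), hGtil.comp (measurable_prodMk_left), fun τ hτ =>
    hGtil_eq s h2 τ hτ⟩, ?_⟩
  filter_upwards [h1, ae_restrict_mem measurableSet_Ioo] with τ hτ1 hτ2
  have h4 := not_lt.1 hτ1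
  rw [hGtil_eq s h2 τ hτ2, ← (hgood s h2).2] at h4
  exact h4

theorem stmt5 {d : ℕ} (hd : 1 ≤ d) (B : Set (Fin d → ℝ)) (hB : MeasurableSet B)
    (a b : ℝ) (I : Set ℝ) (hI : I = Set.Ioo a b)
    (ζ : (Fin d → ℝ) × ℝ → Fin d → ℝ)
    (F : (Fin d → ℝ) → ℝ → Matrix (Fin d) (Fin d) ℝ)
    (hinj : ∀ t ∈ I, Set.InjOn (fun s => ζ (s, t)) B)
    (hF : ∀ t ∈ I, ∀ s ∈ B,
      HasFDerivAt (fun s' => ζ (s', t)) (LinearMap.toContinuousLinearMap (F s t).mulVecLin) s)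
    (hdet : ∀ t ∈ I, ∀ s ∈ B, 0 < (F s t).det)
    (ρ₀ : (Fin d → ℝ) → ℝ) (ρ : (Fin d → ℝ) × ℝ → ℝ)
    (hmass : ∀ s ∈ B, ∀ t ∈ I, ρ (ζ (s, t), t) * (F s t).det = ρ₀ s)
    (ψ ψdot : (Fin d → ℝ) × ℝ → ℝ)
    (hψ : ∀ s ∈ B, ∀ t ∈ I,
      HasDerivAt (fun τ => ψ (ζ (s, τ), τ)) (ψdot (ζ (s, t), t)) t)
    (hint : ∀ t ∈ I, IntegrableOn (fun s => ρ₀ s * ψ (ζ (s, t), t)) B)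
    (hmeas : ∀ t ∈ I,
      AEStronglyMeasurable (fun s => ρ₀ s * ψdot (ζ (s, t), t)) (volume.restrict B))
    (g : (Fin d → ℝ) → ℝ) (hg : IntegrableOn g B)
    (hbound : ∀ τ ∈ I, ∀ᵐ s ∂(volume.restrict B), |ρ₀ s * ψdot (ζ (s, τ), τ)| ≤ g s) :
    ∀ t₀ ∈ I,
      HasDerivAt (fun t => ∫ x in (fun s => ζ (s, t)) '' B, ρ (x, t) * ψ (x, t))
        (∫ x in (fun s => ζ (s, t₀)) '' B, ρ (x, t₀) * ψdot (x, t₀)) t₀ := by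
  subst hI
  intro t₀ ht₀
  have hIop : Set.Ioo a b ∈ 𝓝 t₀ := isOpen_Ioo.mem_nhds ht₀
  -- Step 1: change of variables
  have hchg : ∀ t ∈ Set.Ioo a b, ∀ φfun : (Fin d → ℝ) × ℝ → ℝ,
      ∫ x in (fun s => ζ (s, t)) '' B, ρ (x, t) * φfun (x, t) =
        ∫ s in B, ρ₀ s * φfun (ζ (s, t), t) := by
    intro t ht φfun
    have hder : ∀ s ∈ B, HasFDerivWithinAt (fun s' => ζ (s', t))
        (LinearMap.toContinuousLinearMap (F s t).mulVecLin) B s :=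
      fun s hs => (hF t ht s hs).hasFDerivWithinAt
    rw [integral_image_eq_integral_abs_det_fderiv_smul volume hB hder (hinj t ht)
        (fun x => ρ (x, t) * φfun (x, t))]
    refine setIntegral_congr_fun hB fun s hs => ?_
    have hdet' : ((LinearMap.toContinuousLinearMap (F s t).mulVecLin) :
        (Fin d → ℝ) →L[ℝ] (Fin d → ℝ)).det = (F s t).det := by
      show LinearMap.det _ = _
      rw [LinearMap.coe_toContinuousLinearMap, ← Matrix.toLin'_apply', LinearMap.det_toLin']
    try dsimp only
    rw [hdet', abs_of_pos (hdet t ht s hs), smul_eq_mul]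
    calc (F s t).det * (ρ (ζ (s, t), t) * φfun (ζ (s, t), t))
        = (ρ (ζ (s, t), t) * (F s t).det) * φfun (ζ (s, t), t) := by ring
      _ = ρ₀ s * φfun (ζ (s, t), t) := by rw [hmass s hs t ht]
  -- Step 2: the measure-theoretic swap
  have hswap := stmt5_swap (a := a) (b := b) hB
    (H := fun s τ => ρ₀ s * ψ (ζ (s, τ), τ))
    (Hd := fun s τ => ρ₀ s * ψdot (ζ (s, τ), τ)) hg
    (fun s hs t ht => (hψ s hs t ht).const_mul (ρ₀ s))
    (fun t ht => (hint t ht).1)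
    (fun τ hτ => hbound τ hτ)
  -- Step 3: derivative of `Φ t = ∫ s in B, ρ₀ s * ψ (ζ (s, t), t)`
  set Φ : ℝ → ℝ := fun t => ∫ s in B, ρ₀ s * ψ (ζ (s, t), t) with hΦdef
  set D : ℝ := ∫ s in B, ρ₀ s * ψdot (ζ (s, t₀), t₀) with hDdef
  have hΦ : HasDerivAt Φ D t₀ := by
    rw [hasDerivAt_iff_tendsto_slope]
    have hslope_eq : ∀ᶠ t in 𝓝[≠] t₀, (fun t => ∫ s in B,
        (t - t₀)⁻¹ * (ρ₀ s * ψ (ζ (s, t), t) - ρ₀ s * ψ (ζ (s, t₀), t₀))) t = slope Φ t₀ t := by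
      filter_upwards [nhdsWithin_le_nhds hIop] with t ht
      rw [slope_def_field, hΦdef]
      simp only
      rw [div_eq_inv_mul, ← integral_sub (hint t ht) (hint t₀ ht₀)]
      rw [show ∀ r : ℝ, ∀ f : (Fin d → ℝ) → ℝ, (∫ s in B, r * f s) = r * ∫ s in B, f s from
        fun r f => by rw [← smul_eq_mul, ← integral_smul]; simp [smul_eq_mul]]
    refine Tendsto.congr' hslope_eq ?_
    refine tendsto_integral_filter_of_dominated_convergence g ?_ ?_ hg ?_
    · filter_upwards [nhdsWithin_le_nhds hIop] with t ht
      exact (((hint t ht).1.sub (hint t₀ ht₀).1).const_mul _)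
    · filter_upwards [nhdsWithin_le_nhds hIop, self_mem_nhdsWithin] with t htI htne
      filter_upwards [hswap] with s hs
      obtain ⟨hsB, ⟨G, hGmeas, hGeq⟩, hGbound⟩ := hs
      have huIcc : Set.uIcc t₀ t ⊆ Set.Ioo a b :=
        Set.ordConnected_Ioo.uIcc_subset ht₀ htI
      have hFTC : ∫ τ in t₀..t, G τ =
          ρ₀ s * ψ (ζ (s, t), t) - ρ₀ s * ψ (ζ (s, t₀), t₀) := by
        apply intervalIntegral.integral_eq_sub_of_hasDerivAt
        · intro τ hτ
          have hτI : τ ∈ Set.Ioo a b := huIcc hτ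
          rw [hGeq τ hτI]
          exact (hψ s hsB τ hτI).const_mul (ρ₀ s)
        · rw [intervalIntegrable_iff]
          have hsub : Set.uIoc t₀ t ⊆ Set.Ioo a b :=
            Set.Ioc_subset_Icc_self.trans huIcc
          refine Integrable.mono' (g := fun _ => g s)
            (integrableOn_const measure_Ioc_lt_top.ne)
            (hGmeas.aestronglyMeasurable.restrict) ?_
          filter_upwards [ae_restrict_of_ae_restrict_of_subset hsub hGbound,
            ae_restrict_mem measurableSet_uIoc] with τ h1 h2
          rw [Real.norm_eq_abs, hGeq τ (hsub h2)]
          exact h1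
      have hb2 : |ρ₀ s * ψ (ζ (s, t), t) - ρ₀ s * ψ (ζ (s, t₀), t₀)| ≤ g s * |t - t₀| := by
        rw [← hFTC, ← Real.norm_eq_abs]
        refine intervalIntegral.norm_integral_le_of_norm_le_const_ae ?_
        have h3 := ae_imp_of_ae_restrict hGbound
        filter_upwards [h3] with τ h4 h5
        have hτI : τ ∈ Set.Ioo a b := (Set.Ioc_subset_Icc_self.trans huIcc) h5
        rw [Real.norm_eq_abs, hGeq τ hτI]
        exact h4 hτI
      have htne' : t - t₀ ≠ 0 := sub_ne_zero.2 htne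
      have habs : |t - t₀| ≠ 0 := abs_ne_zero.2 htne'
      calc ‖(t - t₀)⁻¹ * (ρ₀ s * ψ (ζ (s, t), t) - ρ₀ s * ψ (ζ (s, t₀), t₀))‖
          = |t - t₀|⁻¹ * |ρ₀ s * ψ (ζ (s, t), t) - ρ₀ s * ψ (ζ (s, t₀), t₀)| := by
            rw [Real.norm_eq_abs, abs_mul, abs_inv]
        _ ≤ |t - t₀|⁻¹ * (g s * |t - t₀|) := by
            exact mul_le_mul_of_nonneg_left hb2 (by positivity)
        _ = g s := by field_simp
    · filter_upwards [ae_restrict_mem hB] with s hsB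
      have h := hasDerivAt_iff_tendsto_slope.1 ((hψ s hsB t₀ ht₀).const_mul (ρ₀ s))
      refine h.congr fun t => ?_
      rw [slope_def_field, div_eq_inv_mul]
  -- Step 4: conclude
  have hev : (fun t => ∫ x in (fun s => ζ (s, t)) '' B, ρ (x, t) * ψ (x, t)) =ᶠ[𝓝 t₀] Φ := by
    filter_upwards [hIop] with t ht
    exact hchg t ht ψ
  have hfinal := hΦ.congr_of_eventuallyEq hev
  rw [show (∫ x in (fun s => ζ (s, t₀)) '' B, ρ (x, t₀) * ψdot (x, t₀)) = D from hchg t₀ ht₀ ψdot]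
  exact hfinal
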